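/- Let G be a topological group with a discrete locally normal subgroup K (i.e., K discrete and N_G(K) open). Then K is contained in the quasicentre QZ(G), and QZ(N_G(K)/K) = QZ(N_G(K))/K. In particular, if QZ(G) is discrete then QZ(G) is the largest discrete normal subgroup of G and QZ(G/QZ(G)) is trivial. -/

import Mathlib

variable {G : Type*} [Group G] [TopologicalSpace G] [IsTopologicalGroup G]

/-- The quasicentre of a topological group: the set of elements with open centraliser. -/
def quasiCentre (G : Type*) [Group G] [TopologicalSpace G] [IsTopologicalGroup G] :
    Subgroup G where
  carrier := {g | IsOpen ((Subgroup.centralizer {g} : Subgroup G) : Set G)}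
  one_mem' := by
    have h : Subgroup.centralizer ({(1 : G)} : Set G) = ⊤ := by
      ext x; simp [Subgroup.mem_centralizer_iff]
    show IsOpen _
    rw [h]
    simp
  mul_mem' := by
    intro a b ha hb
    have hle : Subgroup.centralizer {a} ⊓ Subgroup.centralizer {b} ≤
        Subgroup.centralizer {a * b} := by
      intro x hx
      rw [Subgroup.mem_inf] at hx
      rw [Subgroup.mem_centralizer_iff]
      rintro m hm
      rw [Set.mem_singleton_iff] at hm; subst hm
      have h1 := Subgroup.mem_centralizer_iff.mp hx.1 a (Set.mem_singleton a)
      have h2 := Subgroup.mem_centralizer_iff.mp hx.2 b (Set.mem_singleton b)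
      rw [mul_assoc, h2, ← mul_assoc, h1, mul_assoc]
    refine Subgroup.isOpen_mono hle ?_
    rw [Subgroup.coe_inf]
    exact ha.inter hb
  inv_mem' := by
    intro a ha
    have hle : Subgroup.centralizer {a} ≤ Subgroup.centralizer {a⁻¹} := by
      intro x hx
      rw [Subgroup.mem_centralizer_iff] at hx ⊢
      rintro m hm
      rw [Set.mem_singleton_iff] at hm; subst hm
      have h1 : Commute a x := hx a (Set.mem_singleton a)
      exact h1.inv_left
    exact Subgroup.isOpen_mono hle ha

lemma mem_quasiCentre {g : G} :
    g ∈ quasiCentre G ↔ IsOpen ((Subgroup.centralizer {g} : Subgroup G) : Set G) :=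
  Iff.rfl

instance quasiCentre_normal : (quasiCentre G).Normal := by
  constructor
  intro a ha g
  rw [mem_quasiCentre] at ha ⊢
  have key : ∀ x : G, ((g * a * g⁻¹) * x = x * (g * a * g⁻¹)) ↔
      (a * (g⁻¹ * x * g) = (g⁻¹ * x * g) * a) := by
    intro x
    constructor
    · intro h
      have h' := congrArg (fun y => g⁻¹ * y * g) h
      simpa [mul_assoc] using h'
    · intro h
      have h' := congrArg (fun y => g * y * g⁻¹) h
      simpa [mul_assoc] using h'
  have hφ : IsOpenMap fun x : G => g * x * g⁻¹ := by
    have heq : (fun x : G => g * x * g⁻¹) = (fun x => x * g⁻¹) ∘ (fun x => g * x) := rfl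
    rw [heq]
    exact (Homeomorph.mulRight g⁻¹).isOpenMap.comp (Homeomorph.mulLeft g).isOpenMap
  have himg : ((Subgroup.centralizer {g * a * g⁻¹} : Subgroup G) : Set G)
      = (fun x : G => g * x * g⁻¹) '' ((Subgroup.centralizer {a} : Subgroup G) : Set G) := by
    ext x
    simp only [Set.mem_image, SetLike.mem_coe, Subgroup.mem_centralizer_iff,
      Set.mem_singleton_iff, forall_eq]
    constructor
    · intro h
      refine ⟨g⁻¹ * x * g, (key x).mp h, by group⟩
    · rintro ⟨y, hy, rfl⟩
      apply (key _).mpr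
      simpa [mul_assoc] using hy
  rw [himg]
  exact hφ _ ha

/-- From a discrete subgroup, extract an open set of `G` separating `1` inside `K`. -/
lemma exists_sep_of_discrete {H : Type*} [Group H] [TopologicalSpace H] (K : Subgroup H)
    (hKd : DiscreteTopology K) : ∃ V : Set H, IsOpen V ∧ ∀ k ∈ K, (k ∈ V ↔ k = 1) := by
  have h1 : IsOpen ({(1 : K)} : Set K) := isOpen_discrete _
  rw [isOpen_induced_iff] at h1
  obtain ⟨V, hV, hVK⟩ := h1
  refine ⟨V, hV, fun k hk => ?_⟩
  have := Set.ext_iff.mp hVK ⟨k, hk⟩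
  simpa [Subtype.ext_iff] using this

/-- Core lemma: if all commutators of `x` with elements of an open neighbourhood `D` of `1`
lie in a subgroup `K` in which `1` is separated by an open set, then `x` is in the
quasicentre. -/
lemma mem_quasiCentre_of_comm {H : Type*} [Group H] [TopologicalSpace H] [IsTopologicalGroup H]
    (K : Subgroup H) (hsep : ∃ V : Set H, IsOpen V ∧ ∀ k ∈ K, (k ∈ V ↔ k = 1))
    (x : H) (D : Set H) (hD : IsOpen D) (h1 : (1 : H) ∈ D)
    (hc : ∀ g ∈ D, g * x * g⁻¹ * x⁻¹ ∈ K) : x ∈ quasiCentre H := by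
  obtain ⟨V, hV, hVK⟩ := hsep
  rw [mem_quasiCentre]
  apply Subgroup.isOpen_of_mem_nhds (g := 1)
  have hcont : Continuous fun g : H => g * x * g⁻¹ * x⁻¹ := by continuity
  have hU : IsOpen (D ∩ (fun g : H => g * x * g⁻¹ * x⁻¹) ⁻¹' V) := hD.inter (hV.preimage hcont)
  have h1U : (1 : H) ∈ D ∩ (fun g : H => g * x * g⁻¹ * x⁻¹) ⁻¹' V := by
    refine ⟨h1, ?_⟩
    have he : (1 : H) * x * 1⁻¹ * x⁻¹ = 1 := by group
    show (1 : H) * x * 1⁻¹ * x⁻¹ ∈ V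
    rw [he]
    exact (hVK 1 K.one_mem).mpr rfl
  refine Filter.mem_of_superset (hU.mem_nhds h1U) ?_
  rintro g ⟨hgD, hgV⟩
  have hone : g * x * g⁻¹ * x⁻¹ = 1 := (hVK _ (hc g hgD)).mp hgV
  rw [SetLike.mem_coe, Subgroup.mem_centralizer_iff]
  intro m hm
  rw [Set.mem_singleton_iff] at hm
  rw [hm]
  have hgx : g * x = x * g := by
    have := congrArg (fun y => y * x * g) hone
    simpa [mul_assoc] using this
  exact hgx.symm

/-- **Discrete locally normal subgroups and the quasicentre.**
Let `G` be a topological group and `K` a discrete locally normal subgroup (i.e. `K` is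
discrete and its normaliser `N = N_G(K)` is open).  Then `K ≤ QZ(G)`, and
`QZ(N/K) = QZ(N)/K`.  In particular, if `QZ(G)` is discrete, then `QZ(G)` is the largest
discrete normal subgroup of `G`, and `QZ(G/QZ(G))` is trivial. -/
theorem discrete_locally_normal_le_quasiCentre
    (K : Subgroup G) (hKdisc : DiscreteTopology K)
    (hKln : IsOpen ((Subgroup.normalizer (K : Set G)) : Set G)) :
    K ≤ quasiCentre G ∧
    (haveI : (K.subgroupOf (Subgroup.normalizer (K : Set G))).Normal := Subgroup.normal_in_normalizer;
      SetLike.coe (quasiCentre (↥(Subgroup.normalizer (K : Set G)) ⧸ K.subgroupOf (Subgroup.normalizer (K : Set G))))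
        = QuotientGroup.mk '' SetLike.coe (quasiCentre ↥(Subgroup.normalizer (K : Set G)))) ∧
    (DiscreteTopology (quasiCentre G) →
      (∀ N : Subgroup G, N.Normal → DiscreteTopology N → N ≤ quasiCentre G) ∧
      quasiCentre (G ⧸ quasiCentre G) = ⊥) := by
  haveI : (K.subgroupOf (Subgroup.normalizer (K : Set G))).Normal := Subgroup.normal_in_normalizer
  obtain ⟨W, hW, hWK⟩ := exists_sep_of_discrete K hKdisc
  refine ⟨?_, ?_, ?_⟩
  · -- K ≤ quasiCentre G
    intro k hk
    refine mem_quasiCentre_of_comm K ⟨W, hW, hWK⟩ k _ hKln (Subgroup.normalizer (K : Set G)).one_mem ?_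
    intro g hg
    have hconj : g * k * g⁻¹ ∈ K := (Subgroup.mem_normalizer_iff.mp hg k).mp hk
    exact K.mul_mem hconj (K.inv_mem hk)
  · -- QZ(N/K) = QZ(N)/K
    set N := Subgroup.normalizer (K : Set G)
    have hsepN : ∃ V : Set ↥N, IsOpen V ∧ ∀ k ∈ K.subgroupOf N, (k ∈ V ↔ k = 1) := by
      refine ⟨(Subtype.val : ↥N → G) ⁻¹' W, hW.preimage continuous_subtype_val, ?_⟩
      intro k hk
      rw [Subgroup.mem_subgroupOf] at hk
      constructor
      · intro hkW
        have : (k : G) = 1 := (hWK _ hk).mp hkW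
        exact Subtype.ext this
      · rintro rfl
        exact (hWK _ hk).mpr rfl
    ext q
    simp only [Set.mem_image, SetLike.mem_coe]
    constructor
    · intro hq
      obtain ⟨x, rfl⟩ := QuotientGroup.mk_surjective q
      refine ⟨x, ?_, rfl⟩
      rw [mem_quasiCentre] at hq
      refine mem_quasiCentre_of_comm (K.subgroupOf N) hsepN x
        ((QuotientGroup.mk : ↥N → ↥N ⧸ K.subgroupOf N) ⁻¹'
          ((Subgroup.centralizer {(QuotientGroup.mk x : ↥N ⧸ K.subgroupOf N)} :
            Subgroup _) : Set _))
        (hq.preimage QuotientGroup.continuous_mk) ?_ ?_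
      · show (1 : ↥N) ∈ _ ⁻¹' _
        rw [Set.mem_preimage, SetLike.mem_coe, QuotientGroup.mk_one]
        exact Subgroup.one_mem _
      · intro g hg
        rw [Set.mem_preimage, SetLike.mem_coe, Subgroup.mem_centralizer_iff] at hg
        have hcomm := hg _ (Set.mem_singleton _)
        rw [← QuotientGroup.eq_one_iff]
        have hmk : (QuotientGroup.mk (g * x * g⁻¹ * x⁻¹) : ↥N ⧸ K.subgroupOf N)
            = QuotientGroup.mk g * QuotientGroup.mk x * (QuotientGroup.mk g)⁻¹
              * (QuotientGroup.mk x)⁻¹ := by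
          simp
        rw [hmk, ← hcomm]
        group
    · rintro ⟨x, hx, rfl⟩
      rw [mem_quasiCentre] at hx ⊢
      have hle : (Subgroup.centralizer {x}).map (QuotientGroup.mk' (K.subgroupOf N))
          ≤ Subgroup.centralizer {(QuotientGroup.mk x : ↥N ⧸ K.subgroupOf N)} := by
        rintro _ ⟨g, hg, rfl⟩
        rw [Subgroup.mem_centralizer_iff]
        intro m hm; rw [Set.mem_singleton_iff] at hm; subst hm
        have := Subgroup.mem_centralizer_iff.mp hg x (Set.mem_singleton x)
        show QuotientGroup.mk x * QuotientGroup.mk g = QuotientGroup.mk g * QuotientGroup.mk x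
        rw [← QuotientGroup.mk_mul, ← QuotientGroup.mk_mul, this]
      refine Subgroup.isOpen_mono hle ?_
      rw [Subgroup.coe_map]
      exact QuotientGroup.isOpenMap_coe _ hx
  · -- If QZ(G) is discrete
    intro hQdisc
    obtain ⟨V, hV, hVQ⟩ := exists_sep_of_discrete (quasiCentre G) hQdisc
    constructor
    · intro M hMnorm hMdisc
      obtain ⟨U, hU, hUM⟩ := exists_sep_of_discrete M hMdisc
      intro m hm
      refine mem_quasiCentre_of_comm M ⟨U, hU, hUM⟩ m Set.univ isOpen_univ trivial ?_
      intro g _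
      exact M.mul_mem (hMnorm.conj_mem m hm g) (M.inv_mem hm)
    · rw [Subgroup.eq_bot_iff_forall]
      intro q hq
      obtain ⟨x, rfl⟩ := QuotientGroup.mk_surjective q
      rw [mem_quasiCentre] at hq
      have hx : x ∈ quasiCentre G := by
        refine mem_quasiCentre_of_comm (quasiCentre G) ⟨V, hV, hVQ⟩ x
          ((QuotientGroup.mk : G → G ⧸ quasiCentre G) ⁻¹'
            ((Subgroup.centralizer {(QuotientGroup.mk x : G ⧸ quasiCentre G)} :
              Subgroup _) : Set _))
          (hq.preimage QuotientGroup.continuous_mk) ?_ ?_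
        · show (1 : G) ∈ _ ⁻¹' _
          rw [Set.mem_preimage, SetLike.mem_coe, QuotientGroup.mk_one]
          exact Subgroup.one_mem _
        · intro g hg
          rw [Set.mem_preimage, SetLike.mem_coe, Subgroup.mem_centralizer_iff] at hg
          have hcomm := hg _ (Set.mem_singleton _)
          rw [← QuotientGroup.eq_one_iff]
          have hmk : (QuotientGroup.mk (g * x * g⁻¹ * x⁻¹) : G ⧸ quasiCentre G)
              = QuotientGroup.mk g * QuotientGroup.mk x * (QuotientGroup.mk g)⁻¹
                * (QuotientGroup.mk x)⁻¹ := by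
            simp
          rw [hmk, ← hcomm]
          group
      exact (QuotientGroup.eq_one_iff x).mpr hx
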